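/- Let Ω be an open subset of ℝ and let f : ℝ → ℝ be differentiable at every point of Ω. Then the supremum over Ω of |f'| equals the essential supremum over Ω of |f'| with respect to Lebesgue measure. -/

import Mathlib

open MeasureTheory ENNReal NNReal

/-- If `f : ℝ → ℝ` is differentiable at every point of an open set `Ω ⊆ ℝ`, then the pointwise
supremum of `|f'|` over `Ω` equals the essential supremum of `|f'|` over `Ω` with respect to
Lebesgue measure, both interpreted in `[0, ∞]`. -/
theorem stmt_2 (Ω : Set ℝ) (hΩ : IsOpen Ω) (f : ℝ → ℝ)
    (hdiff : ∀ x ∈ Ω, DifferentiableAt ℝ f x) :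
    (⨆ x ∈ Ω, (‖deriv f x‖₊ : ℝ≥0∞)) =
      essSup (fun x => (‖deriv f x‖₊ : ℝ≥0∞)) (volume.restrict Ω) := by
  set M := essSup (fun x => (‖deriv f x‖₊ : ℝ≥0∞)) (volume.restrict Ω) with hMdef
  apply le_antisymm
  · -- hard direction: sup ≤ essSup
    refine iSup₂_le fun x hx => ?_
    rcases eq_top_or_lt_top M with htop | hMlt
    · rw [htop]; exact le_top
    obtain ⟨δ, hδ0, hball⟩ := Metric.isOpen_iff.1 hΩ x hx
    have hae : ∀ᵐ t ∂(volume.restrict Ω), (‖deriv f t‖₊ : ℝ≥0∞) ≤ M :=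
      ENNReal.ae_le_essSup _
    have hae' : ∀ᵐ t, t ∈ Ω → (‖deriv f t‖₊ : ℝ≥0∞) ≤ M :=
      (ae_restrict_iff' hΩ.measurableSet).1 hae
    set C := M.toReal with hCdef
    -- the key estimate on differences
    have key : ∀ y ∈ Metric.ball x δ, |f y - f x| ≤ C * |y - x| := by
      intro y hy
      have hxball : x ∈ Metric.ball x δ := Metric.mem_ball_self hδ0
      have hsub : Set.uIcc x y ⊆ Ω := fun t ht =>
        hball ((convex_ball x δ).ordConnected.uIcc_subset hxball hy ht)
      have hsub' : Set.uIoc x y ⊆ Ω := fun t ht => hsub (Set.Ioc_subset_Icc_self ht)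
      -- a.e. bound on the interval
      have haeI : ∀ᵐ t ∂(volume.restrict (Set.uIoc x y)), ‖deriv f t‖ ≤ C := by
        filter_upwards [ae_restrict_of_ae hae', ae_restrict_mem measurableSet_uIoc]
          with t ht htI
        have := ht (hsub' htI)
        have : ENNReal.ofReal ‖deriv f t‖ ≤ M := by
          rwa [ofReal_norm, enorm_eq_nnnorm]
        calc ‖deriv f t‖ = (ENNReal.ofReal ‖deriv f t‖).toReal :=
              (ENNReal.toReal_ofReal (norm_nonneg _)).symm
          _ ≤ C := ENNReal.toReal_mono hMlt.ne this
      have hvol : volume (Set.uIoc x y) = ENNReal.ofReal |y - x| := by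
        rw [Set.uIoc, Real.volume_Ioc, max_sub_min_eq_abs, abs_sub_comm]
      -- integrability of the derivative on the interval
      have hmeas : Measurable (deriv f) := measurable_deriv f
      have hint : IntervalIntegrable (deriv f) volume x y := by
        rw [intervalIntegrable_iff]
        refine ⟨hmeas.aestronglyMeasurable.restrict, ?_⟩
        refine (hasFiniteIntegral_iff_norm _).2 ?_
        calc ∫⁻ t in Set.uIoc x y, ENNReal.ofReal ‖deriv f t‖
            ≤ ∫⁻ _ in Set.uIoc x y, ENNReal.ofReal C := by
              refine lintegral_mono_ae ?_
              filter_upwards [haeI] with t ht using ENNReal.ofReal_le_ofReal ht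
          _ = ENNReal.ofReal C * volume (Set.uIoc x y) := by
              rw [setLIntegral_const]
          _ < ⊤ := ENNReal.mul_lt_top ENNReal.ofReal_lt_top
              (by rw [hvol]; exact ENNReal.ofReal_lt_top)
      -- FTC
      have hFTC : ∫ t in x..y, deriv f t = f y - f x :=
        intervalIntegral.integral_eq_sub_of_hasDerivAt
          (fun t ht => (hdiff t (hsub ht)).hasDerivAt) hint
      -- bound the integral
      have hCint : IntegrableOn (fun _ : ℝ => C) (Set.uIoc x y) volume :=
        integrableOn_const (by rw [hvol]; exact ENNReal.ofReal_ne_top)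
      calc |f y - f x| = ‖∫ t in x..y, deriv f t‖ := by rw [hFTC, Real.norm_eq_abs]
        _ ≤ ∫ t in Set.uIoc x y, ‖deriv f t‖ :=
            intervalIntegral.norm_integral_le_integral_norm_uIoc
        _ ≤ ∫ _ in Set.uIoc x y, C := by
            refine integral_mono_ae ?_ hCint haeI
            exact (intervalIntegrable_iff.1 hint).norm
        _ = C * |y - x| := by
            rw [setIntegral_const, smul_eq_mul, measureReal_def, hvol,
              ENNReal.toReal_ofReal (abs_nonneg _), mul_comm]
    -- pass to the limit in the slope
    have hslope : Filter.Tendsto (slope f x) (nhdsWithin x {x}ᶜ) (nhds (deriv f x)) :=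
      hasDerivAt_iff_tendsto_slope.1 (hdiff x hx).hasDerivAt
    have hbound : |deriv f x| ≤ C := by
      refine le_of_tendsto (hslope.abs) ?_
      have hmem : Metric.ball x δ ∈ nhdsWithin x {x}ᶜ :=
        nhdsWithin_le_nhds (Metric.ball_mem_nhds x hδ0)
      filter_upwards [hmem, self_mem_nhdsWithin] with y hy hy'
      have hyx : y ≠ x := hy'
      have h0 : (0 : ℝ) < |y - x| := by
        rw [abs_pos, sub_ne_zero]; exact hyx
      have hs : slope f x y = (f y - f x) / (y - x) := by
        rw [slope_def_field, ← neg_div_neg_eq, neg_sub, neg_sub]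
      rw [hs, abs_div, div_le_iff₀ h0]
      exact key y hy
    -- conclude
    have : (‖deriv f x‖₊ : ℝ≥0∞) = ENNReal.ofReal |deriv f x| := by
      rw [← enorm_eq_nnnorm, ← ofReal_norm, Real.norm_eq_abs]
    rw [this]
    calc ENNReal.ofReal |deriv f x| ≤ ENNReal.ofReal C := ENNReal.ofReal_le_ofReal hbound
      _ = M := ENNReal.ofReal_toReal hMlt.ne
  · -- easy direction: essSup ≤ sup
    refine essSup_le_of_ae_le _ ?_
    filter_upwards [ae_restrict_mem hΩ.measurableSet] with y hy
    exact le_iSup₂ (f := fun z (_ : z ∈ Ω) => (‖deriv f z‖₊ : ℝ≥0∞)) y hy
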